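/- Let L be a Lie superalgebra over R, let P : L → L be an R-linear parity-preserving projector whose image V = P(L) is an abelian subalgebra and which satisfies the distributive law, and let Δ ∈ L be an odd element. Then for every n ≥ 0 and all homogeneous elements a₁,…,aₙ ∈ V, the n-th Jacobiator of the higher derived brackets of Δ equals the n-th derived bracket of Δ²: Jⁿ_Δ(a₁,…,aₙ) = {a₁,…,aₙ}_{Δ²}. -/

import Mathlib

/-!
Higher derived brackets (Th. Voronov, "Higher derived brackets and homotopy algebras").

STATEMENT 0: For a Lie superalgebra `L` over `R` with a parity-preserving projector `P`
onto an abelian subalgebra satisfying the distributive law, and an odd element `Δ`,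
the `n`-th Jacobiator of the higher derived brackets of `Δ` equals the
`n`-th derived bracket of `Δ² = (1/2)[Δ,Δ]`.
-/

open Finset

/-- The sign `(-1)^e` for a parity `e : ZMod 2`, as an element of `R`. -/
def sgn (R : Type*) [CommRing R] (e : ZMod 2) : R := if e = 0 then 1 else -1

variable {R : Type*} [CommRing R] {L : Type*} [AddCommGroup L] [Module R L]

/-- Iterated bracket `[...[[z,a₁],a₂],...,aₙ]`. -/
def iterBr (br : L →ₗ[R] L →ₗ[R] L) : L → List L → L
  | z, [] => z
  | z, a :: rest => iterBr br (br z a) rest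

/-- The `n`-th higher derived bracket `{a₁,...,aₙ}_Δ := P [...[[Δ,a₁],a₂],...,aₙ]`. -/
def dbr (br : L →ₗ[R] L →ₗ[R] L) (P : L →ₗ[R] L) (Δ : L) (n : ℕ) (a : Fin n → L) : L :=
  P (iterBr br Δ (List.ofFn a))

/-- The exponent of the Koszul sign of the `(k,l)`-shuffle determined by the
`k`-element subset `S ⊆ {0,...,n-1}` on homogeneous arguments of parities `p i`:
a factor `(-1)^{p i · p j}` for each pair `i < j` with `i ∉ S`, `j ∈ S`. -/
def koszulExp {n : ℕ} (p : Fin n → ZMod 2) (S : Finset (Fin n)) : ZMod 2 :=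
  ∑ j ∈ S, ∑ i ∈ Sᶜ.filter (fun i => i < j), p i * p j

/-- The `n`-th Jacobiator
`Jⁿ(a₁,…,aₙ) = Σ_{k+l=n} Σ_{(k,l)-shuffles σ} (−1)^α {{a_{σ(1)},…,a_{σ(k)}}, a_{σ(k+1)},…,a_{σ(n)}}`
of a family of `n`-ary operations, the sum over `(k,l)`-shuffles being realized as a sum
over the `k`-element subsets `S` of indices (listed in increasing order inside each group),
with `(−1)^α` the Koszul sign of the shuffle on arguments of parities `p i`. -/
def Jac (R : Type*) [CommRing R] {M : Type*} [AddCommGroup M] [Module R M]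
    (br : ∀ n : ℕ, (Fin n → M) → M) (n : ℕ) (p : Fin n → ZMod 2) (a : Fin n → M) : M :=
  ∑ S : Finset (Fin n),
    sgn R (koszulExp p S) •
      br (Sᶜ.card + 1)
        (Fin.cons (br S.card (fun i => a ((S.orderIsoOfFin rfl i : Fin n))))
          (fun i => a ((Sᶜ.orderIsoOfFin rfl i : Fin n))))

/-! ### Auxiliary sign lemmas -/

lemma sgn_add (x y : ZMod 2) : sgn R (x + y) = sgn R x * sgn R y := by
  fin_cases x <;> fin_cases y <;> simp [sgn, (by decide : (1+1 : ZMod 2) = 0)] <;> split_ifs <;> simp_all <;> contradiction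

lemma sgn_zero : sgn R 0 = 1 := rfl

lemma zmod2_eq1 : ∀ x y z : ZMod 2, (x + y) * z + z * x = z * y := by decide

lemma zmod2_eq2 : ∀ x y z : ZMod 2, (x + y) * z + (z * x + z * y) = 0 := by decide

lemma neg_sgn_mul_neg_sgn (u v : ZMod 2) :
    (-(sgn R u)) * (-(sgn R v)) = sgn R (u + v) := by rw [neg_mul_neg, sgn_add]

/-! ### Linearity of the iterated bracket -/

lemma iterBr_add (br : L →ₗ[R] L →ₗ[R] L) (z w : L) (l : List L) :
    iterBr br (z + w) l = iterBr br z l + iterBr br w l := by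
  induction l generalizing z w with
  | nil => rfl
  | cons b t ih => simp only [iterBr, map_add, LinearMap.add_apply, ih]

lemma iterBr_smul (br : L →ₗ[R] L →ₗ[R] L) (c : R) (z : L) (l : List L) :
    iterBr br (c • z) l = c • iterBr br z l := by
  induction l generalizing z with
  | nil => rfl
  | cons b t ih => simp only [iterBr, map_smul, LinearMap.smul_apply, ih]

/-! ### Koszul-sign bookkeeping -/

def kz {n : ℕ} (p : Fin n → ZMod 2) (T U : Finset (Fin n)) : ZMod 2 :=
  ∑ j ∈ T, ∑ i ∈ U.filter (fun i => i < j), p i * p j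

lemma koszulExp_eq_kz {n : ℕ} (p : Fin n → ZMod 2) (S : Finset (Fin n)) :
    koszulExp p S = kz p S Sᶜ := rfl

lemma kz_empty_left {n : ℕ} (p : Fin n → ZMod 2) (U : Finset (Fin n)) : kz p ∅ U = 0 := by
  simp [kz]

lemma kz_insert_left {n : ℕ} (p : Fin n → ZMod 2) {T U : Finset (Fin n)} {x : Fin n}
    (hx : x ∉ T) (hU : ∀ i ∈ U, x < i) : kz p (insert x T) U = kz p T U := by
  rw [kz, Finset.sum_insert hx]
  have h : U.filter (fun i => i < x) = ∅ :=
    Finset.filter_false_of_mem (fun i hi => not_lt.mpr (le_of_lt (hU i hi)))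
  rw [h, Finset.sum_empty, zero_add, kz]

lemma kz_insert_right {n : ℕ} (p : Fin n → ZMod 2) {T U : Finset (Fin n)} {x : Fin n}
    (hx : x ∉ U) (hT : ∀ j ∈ T, x < j) :
    kz p T (insert x U) = kz p T U + p x * ∑ j ∈ T, p j := by
  rw [kz, kz, Finset.mul_sum, ← Finset.sum_add_distrib]
  refine Finset.sum_congr rfl fun j hj => ?_
  have hfi : (insert x U).filter (fun i => i < j) = insert x (U.filter (fun i => i < j)) := by
    rw [Finset.filter_insert, if_pos (hT j hj)]
  rw [hfi, Finset.sum_insert (fun hmem => hx (Finset.mem_of_mem_filter x hmem))]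
  ring

lemma kz_comm_add {n : ℕ} (p : Fin n → ZMod 2) (T U : Finset (Fin n)) (hd : Disjoint T U) :
    kz p T U + kz p U T = (∑ i ∈ T, p i) * (∑ j ∈ U, p j) := by
  rw [Finset.sum_mul_sum]
  have key : ∀ i ∈ T, (∑ j ∈ U, p i * p j)
      = (∑ j ∈ U.filter (fun j => j < i), p j * p i)
        + ∑ j ∈ U.filter (fun j => i < j), p i * p j := by
    intro i hi
    rw [← Finset.sum_filter_add_sum_filter_not U (fun j => j < i)]
    congr 1
    · exact Finset.sum_congr rfl fun j _ => mul_comm _ _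
    · refine Finset.sum_congr (Finset.filter_congr fun j hj => ?_) fun j _ => rfl
      have hne : j ≠ i := fun h => (Finset.disjoint_left.mp hd hi) (h ▸ hj)
      exact ⟨fun h => lt_of_le_of_ne (not_lt.mp h) (Ne.symm hne), fun h => asymm h⟩
  rw [Finset.sum_congr rfl key, Finset.sum_add_distrib]
  congr 1
  · rw [kz]
    simp_rw [Finset.sum_filter]
    exact Finset.sum_comm

lemma sum_map_sort {n : ℕ} (p : Fin n → ZMod 2) (S : Finset (Fin n)) :
    ((S.sort (· ≤ ·)).map p).sum = ∑ i ∈ S, p i := by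
  have h := Finset.sort_eq (s := S) (r := (· ≤ ·))
  rw [Finset.sum, ← h, Multiset.map_coe, Multiset.sum_coe]

/-! ### Core algebraic lemmas -/

section alg
variable {grading : ZMod 2 → Submodule R L} {br : L →ₗ[R] L →ₗ[R] L} {P : L →ₗ[R] L}
  {n : ℕ} {p : Fin n → ZMod 2} {a : Fin n → L}

lemma iterBr_mem
    (hgrade : ∀ (i j : ZMod 2) (a b : L), a ∈ grading i → b ∈ grading j →
      br a b ∈ grading (i + j))
    (hahom : ∀ i, a i ∈ grading (p i)) :
    ∀ (s : List (Fin n)) (z : L) (ζ : ZMod 2), z ∈ grading ζ →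
      iterBr br z (s.map a) ∈ grading (ζ + (s.map p).sum)
  | [], z, ζ, hz => by simpa [iterBr] using hz
  | i :: t, z, ζ, hz => by
      have h := iterBr_mem hgrade hahom t (br z (a i)) (ζ + p i)
        (hgrade _ _ _ _ hz (hahom i))
      simpa [List.map_cons, List.sum_cons, iterBr, add_assoc] using h

lemma swap_one
    (hgrade : ∀ (i j : ZMod 2) (a b : L), a ∈ grading i → b ∈ grading j →
      br a b ∈ grading (i + j))
    (hskew : ∀ (i j : ZMod 2) (a b : L), a ∈ grading i → b ∈ grading j →
      br a b = (-(sgn R (i * j))) • br b a)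
    (hjacobi : ∀ (i j : ZMod 2) (a b c : L), a ∈ grading i → b ∈ grading j →
      br a (br b c) = br (br a b) c + (sgn R (i * j)) • br b (br a c))
    (habelian : ∀ x y : L, br (P x) (P y) = 0)
    (z : L) (ζ : ZMod 2) (hz : z ∈ grading ζ)
    (w : L) (β : ZMod 2) (hb : P w ∈ grading β)
    (i : Fin n) (hai : a i ∈ grading (p i)) (haiV : a i ∈ LinearMap.range P) :
    br (br z (P w)) (a i) = sgn R (p i * β) • br (br z (a i)) (P w) := by
  obtain ⟨w', hw'⟩ := haiV
  have h0 : br (a i) (P w) = 0 := by rw [← hw']; exact habelian w' w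
  have h2 := hjacobi (p i) ζ (a i) z (P w) hai hz
  rw [h0, map_zero, smul_zero, add_zero, hskew (p i) ζ (a i) z hai hz,
    map_smul, LinearMap.smul_apply] at h2
  rw [hskew (ζ + β) (p i) (br z (P w)) (a i) (hgrade _ _ _ _ hz hb) hai, h2,
    smul_smul, neg_sgn_mul_neg_sgn]
  rw [zmod2_eq1]

lemma leibniz_one
    (hgrade : ∀ (i j : ZMod 2) (a b : L), a ∈ grading i → b ∈ grading j →
      br a b ∈ grading (i + j))
    (hskew : ∀ (i j : ZMod 2) (a b : L), a ∈ grading i → b ∈ grading j →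
      br a b = (-(sgn R (i * j))) • br b a)
    (hjacobi : ∀ (i j : ZMod 2) (a b c : L), a ∈ grading i → b ∈ grading j →
      br a (br b c) = br (br a b) c + (sgn R (i * j)) • br b (br a c))
    (X : L) (x : ZMod 2) (hX : X ∈ grading x) (Y : L) (y : ZMod 2) (hY : Y ∈ grading y)
    (c : L) (γ : ZMod 2) (hc : c ∈ grading γ) :
    br (br X Y) c = sgn R (γ * y) • br (br X c) Y + br X (br Y c) := by
  have h2 := hjacobi γ x c X Y hc hX
  rw [hskew γ x c X hc hX, hskew γ y c Y hc hY, map_smul, LinearMap.smul_apply,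
    map_smul, smul_smul] at h2
  rw [hskew (x + y) γ (br X Y) c (hgrade _ _ _ _ hX hY) hc, h2, smul_add,
    smul_smul, smul_smul, neg_sgn_mul_neg_sgn]
  rw [zmod2_eq1]
  congr 1
  have hc1 : -sgn R ((x + y) * γ) * (sgn R (γ * x) * -sgn R (γ * y)) = 1 := by
    have h : -sgn R ((x + y) * γ) * (sgn R (γ * x) * -sgn R (γ * y))
        = sgn R ((x + y) * γ) * (sgn R (γ * x) * sgn R (γ * y)) := by ring
    rw [h, ← sgn_add, ← sgn_add, zmod2_eq2, sgn_zero]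
  rw [hc1, one_smul]

lemma moveb
    (hgrade : ∀ (i j : ZMod 2) (a b : L), a ∈ grading i → b ∈ grading j →
      br a b ∈ grading (i + j))
    (hskew : ∀ (i j : ZMod 2) (a b : L), a ∈ grading i → b ∈ grading j →
      br a b = (-(sgn R (i * j))) • br b a)
    (hjacobi : ∀ (i j : ZMod 2) (a b c : L), a ∈ grading i → b ∈ grading j →
      br a (br b c) = br (br a b) c + (sgn R (i * j)) • br b (br a c))
    (habelian : ∀ x y : L, br (P x) (P y) = 0)
    (hahom : ∀ i, a i ∈ grading (p i)) (haV : ∀ i, a i ∈ LinearMap.range P)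
    (w : L) (β : ZMod 2) (hb : P w ∈ grading β) :
    ∀ (s : List (Fin n)) (z : L) (ζ : ZMod 2), z ∈ grading ζ →
    iterBr br (br z (P w)) (s.map a)
      = sgn R ((s.map p).sum * β) • br (iterBr br z (s.map a)) (P w)
  | [], z, ζ, hz => by simp [iterBr, sgn_zero]
  | i :: t, z, ζ, hz => by
    have hs := swap_one hgrade hskew hjacobi habelian z ζ hz w β hb i (hahom i) (haV i)
    have ih := moveb hgrade hskew hjacobi habelian hahom haV w β hb t (br z (a i))
      (ζ + p i) (hgrade _ _ _ _ hz (hahom i))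
    calc iterBr br (br z (P w)) ((i :: t).map a)
        = iterBr br (br (br z (P w)) (a i)) (t.map a) := rfl
      _ = iterBr br (sgn R (p i * β) • br (br z (a i)) (P w)) (t.map a) := by rw [hs]
      _ = sgn R (p i * β) • iterBr br (br (br z (a i)) (P w)) (t.map a) :=
          iterBr_smul br _ _ _
      _ = sgn R (p i * β) • (sgn R ((t.map p).sum * β) •
            br (iterBr br (br z (a i)) (t.map a)) (P w)) := by rw [ih]
      _ = sgn R (((i :: t).map p).sum * β) • br (iterBr br z ((i :: t).map a)) (P w) := by
          rw [smul_smul, ← sgn_add, ← add_mul, List.map_cons, List.sum_cons]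
          rfl

lemma expand
    (hgrade : ∀ (i j : ZMod 2) (a b : L), a ∈ grading i → b ∈ grading j →
      br a b ∈ grading (i + j))
    (hskew : ∀ (i j : ZMod 2) (a b : L), a ∈ grading i → b ∈ grading j →
      br a b = (-(sgn R (i * j))) • br b a)
    (hjacobi : ∀ (i j : ZMod 2) (a b c : L), a ∈ grading i → b ∈ grading j →
      br a (br b c) = br (br a b) c + (sgn R (i * j)) • br b (br a c))
    (hahom : ∀ i, a i ∈ grading (p i))
    (S : Finset (Fin n)) :
    ∀ (X : L) (x : ZMod 2), X ∈ grading x → ∀ (Y : L) (y : ZMod 2), Y ∈ grading y →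
    iterBr br (br X Y) ((S.sort (· ≤ ·)).map a)
      = ∑ T ∈ S.powerset,
          sgn R ((∑ i ∈ T, p i) * y + kz p T (S \ T)) •
            br (iterBr br X ((T.sort (· ≤ ·)).map a))
               (iterBr br Y (((S \ T).sort (· ≤ ·)).map a)) := by
  induction S using Finset.induction_on_min with
  | empty =>
      intro X x hX Y y hY
      simp [iterBr, kz_empty_left, sgn_zero]
  | insert m S hmin ih =>
      intro X x hX Y y hY
      have hm : m ∉ S := fun h => lt_irrefl m (hmin m h)
      have hsort : (insert m S).sort (· ≤ ·) = m :: S.sort (· ≤ ·) :=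
        Finset.sort_insert (· ≤ ·) (fun b hb => le_of_lt (hmin b hb)) hm
      have hXm : br X (a m) ∈ grading (x + p m) := hgrade _ _ _ _ hX (hahom m)
      have hYm : br Y (a m) ∈ grading (y + p m) := hgrade _ _ _ _ hY (hahom m)
      have hlz := leibniz_one hgrade hskew hjacobi X x hX Y y hY (a m) (p m) (hahom m)
      rw [hsort, List.map_cons]
      show iterBr br (br (br X Y) (a m)) (List.map a (S.sort (· ≤ ·))) = _
      rw [hlz, iterBr_add, iterBr_smul, ih (br X (a m)) (x + p m) hXm Y y hY,
        ih X x hX (br Y (a m)) (y + p m) hYm,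
        Finset.sum_powerset_insert hm, Finset.smul_sum, add_comm]
      congr 1
      · -- terms where m goes to the `Y` side
        refine Finset.sum_congr rfl fun T hT => ?_
        have hTS := Finset.mem_powerset.mp hT
        have hmT : m ∉ T := fun h => hm (hTS h)
        have hmSd : m ∉ S \ T := fun h => hm (Finset.mem_sdiff.mp h).1
        have hset : insert m S \ T = insert m (S \ T) :=
          Finset.insert_sdiff_of_notMem S hmT
        have hsort2 : (insert m (S \ T)).sort (· ≤ ·) = m :: (S \ T).sort (· ≤ ·) :=
          Finset.sort_insert (· ≤ ·)
            (fun b hb => le_of_lt (hmin b (Finset.mem_sdiff.mp hb).1)) hmSd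
        have hkz : kz p T (insert m (S \ T)) = kz p T (S \ T) + p m * ∑ j ∈ T, p j :=
          kz_insert_right p hmSd (fun j hj => hmin j (hTS hj))
        rw [hset, hsort2, List.map_cons, hkz]
        congr 1
        congr 1
        ring
      · -- terms where m goes to the `X` side
        refine Finset.sum_congr rfl fun T hT => ?_
        have hTS := Finset.mem_powerset.mp hT
        have hmT : m ∉ T := fun h => hm (hTS h)
        have hset : insert m S \ insert m T = S \ T := by
          ext b
          simp only [Finset.mem_sdiff, Finset.mem_insert, not_or]
          constructor
          · rintro ⟨h1 | h1, h2, h3⟩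
            · exact absurd h1 h2
            · exact ⟨h1, h3⟩
          · rintro ⟨h1, h2⟩
            exact ⟨Or.inr h1, fun he => hm (he ▸ h1), h2⟩
        have hsort2 : (insert m T).sort (· ≤ ·) = m :: T.sort (· ≤ ·) :=
          Finset.sort_insert (· ≤ ·) (fun b hb => le_of_lt (hmin b (hTS hb))) hmT
        have hkz : kz p (insert m T) (S \ T) = kz p T (S \ T) :=
          kz_insert_left p hmT (fun i hi => hmin i (Finset.mem_sdiff.mp hi).1)
        have hsum : ∑ i ∈ insert m T, p i = p m + ∑ i ∈ T, p i := Finset.sum_insert hmT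
        rw [hset, hsort2, List.map_cons, hkz, hsum, smul_smul, ← sgn_add]
        congr 1
        congr 1
        ring
end alg
/-! ### Assembly -/

lemma sgn_one : sgn R (1 : ZMod 2) = -1 := by rw [sgn, if_neg (by decide)]

lemma zmod2_add_self : ∀ x : ZMod 2, x + x = 0 := by decide

lemma zmod2_eq3 : ∀ u v : ZMod 2, (1+u)*(1+v) + v*(1+u) = 1 + u := by decide

lemma zmod2_eq4 : ∀ u k : ZMod 2, (u + k) + u = k := by decide

lemma zmod2_eq5 : ∀ u v k1 k2 : ZMod 2, k1 + k2 = u * v → (v + k2) + v * (1 + u) = k1 := by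
  decide

lemma ofFn_sort_map {n : ℕ} {α : Type*} (a : Fin n → α) (S : Finset (Fin n)) :
    List.ofFn (fun i : Fin S.card => a ((S.orderIsoOfFin rfl i : Fin n)))
      = (S.sort (· ≤ ·)).map a := by
  apply List.ext_getElem
  · simp
  · intro i h1 h2
    simp only [List.getElem_ofFn, List.getElem_map]
    congr 1

/-- `[...[Δ,a_{s₁}],...,a_{s_k}]` over the increasing enumeration of `S`. -/
def XX (br : L →ₗ[R] L →ₗ[R] L) (Δ : L) {n : ℕ} (a : Fin n → L) (S : Finset (Fin n)) : L :=
  iterBr br Δ ((S.sort (· ≤ ·)).map a)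

/-- The Jacobiator term `P [...[[Δ,{a_S}],a_{S^c}]...]`. -/
def Jt (br : L →ₗ[R] L →ₗ[R] L) (P : L →ₗ[R] L) (Δ : L) {n : ℕ} (a : Fin n → L)
    (S : Finset (Fin n)) : L :=
  P (iterBr br (br Δ (P (XX br Δ a S))) ((Sᶜ.sort (· ≤ ·)).map a))

lemma jac_eq (br : L →ₗ[R] L →ₗ[R] L) (P : L →ₗ[R] L) (Δ : L) {n : ℕ}
    (p : Fin n → ZMod 2) (a : Fin n → L) :
    Jac R (dbr br P Δ) n p a
      = ∑ S : Finset (Fin n), sgn R (kz p S Sᶜ) • Jt br P Δ a S := by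
  rw [Jac]
  refine Finset.sum_congr rfl fun S _ => ?_
  rw [koszulExp_eq_kz]
  congr 1
  rw [Jt, XX, dbr, List.ofFn_succ]
  simp only [Fin.cons_zero, Fin.cons_succ]
  rw [ofFn_sort_map a Sᶜ, dbr, ofFn_sort_map a S]
  rfl

section final
variable {grading : ZMod 2 → Submodule R L} {br : L →ₗ[R] L →ₗ[R] L} {P : L →ₗ[R] L}
  {n : ℕ} {p : Fin n → ZMod 2} {a : Fin n → L} {Δ : L}

lemma XX_mem
    (hgrade : ∀ (i j : ZMod 2) (a b : L), a ∈ grading i → b ∈ grading j →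
      br a b ∈ grading (i + j))
    (hahom : ∀ i, a i ∈ grading (p i)) (hΔ : Δ ∈ grading 1) (S : Finset (Fin n)) :
    XX br Δ a S ∈ grading (1 + ∑ i ∈ S, p i) := by
  rw [XX]
  have h := iterBr_mem hgrade hahom (S.sort (· ≤ ·)) Δ 1 hΔ
  rwa [sum_map_sort] at h

lemma termA
    (hgrade : ∀ (i j : ZMod 2) (a b : L), a ∈ grading i → b ∈ grading j →
      br a b ∈ grading (i + j))
    (hskew : ∀ (i j : ZMod 2) (a b : L), a ∈ grading i → b ∈ grading j →
      br a b = (-(sgn R (i * j))) • br b a)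
    (hjacobi : ∀ (i j : ZMod 2) (a b c : L), a ∈ grading i → b ∈ grading j →
      br a (br b c) = br (br a b) c + (sgn R (i * j)) • br b (br a c))
    (hPparity : ∀ (i : ZMod 2) (x : L), x ∈ grading i → P x ∈ grading i)
    (habelian : ∀ x y : L, br (P x) (P y) = 0)
    (hΔ : Δ ∈ grading 1)
    (hahom : ∀ i, a i ∈ grading (p i)) (haV : ∀ i, a i ∈ LinearMap.range P)
    (S : Finset (Fin n)) :
    P (br (P (XX br Δ a S)) (XX br Δ a Sᶜ))
      = sgn R (∑ i ∈ S, p i) • Jt br P Δ a S := by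
  have hbmem : P (XX br Δ a S) ∈ grading (1 + ∑ i ∈ S, p i) :=
    hPparity _ _ (XX_mem hgrade hahom hΔ S)
  have h1 := hskew (1 + ∑ i ∈ S, p i) (1 + ∑ i ∈ Sᶜ, p i) (P (XX br Δ a S))
    (XX br Δ a Sᶜ) hbmem (XX_mem hgrade hahom hΔ Sᶜ)
  have h2 := moveb hgrade hskew hjacobi habelian hahom haV (XX br Δ a S)
    (1 + ∑ i ∈ S, p i) hbmem (Sᶜ.sort (· ≤ ·)) Δ 1 hΔ
  rw [sum_map_sort] at h2
  have h3 : br (XX br Δ a Sᶜ) (P (XX br Δ a S))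
      = sgn R ((∑ i ∈ Sᶜ, p i) * (1 + ∑ i ∈ S, p i)) •
          iterBr br (br Δ (P (XX br Δ a S))) ((Sᶜ.sort (· ≤ ·)).map a) := by
    rw [h2, smul_smul, ← sgn_add, zmod2_add_self, sgn_zero, one_smul, XX]
  rw [h1, h3, map_smul, map_smul, smul_smul, Jt]
  congr 1
  rw [neg_mul, ← sgn_add, zmod2_eq3, sgn_add, sgn_one]
  ring

lemma termB
    (hgrade : ∀ (i j : ZMod 2) (a b : L), a ∈ grading i → b ∈ grading j →
      br a b ∈ grading (i + j))
    (hskew : ∀ (i j : ZMod 2) (a b : L), a ∈ grading i → b ∈ grading j →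
      br a b = (-(sgn R (i * j))) • br b a)
    (hjacobi : ∀ (i j : ZMod 2) (a b c : L), a ∈ grading i → b ∈ grading j →
      br a (br b c) = br (br a b) c + (sgn R (i * j)) • br b (br a c))
    (hPparity : ∀ (i : ZMod 2) (x : L), x ∈ grading i → P x ∈ grading i)
    (habelian : ∀ x y : L, br (P x) (P y) = 0)
    (hΔ : Δ ∈ grading 1)
    (hahom : ∀ i, a i ∈ grading (p i)) (haV : ∀ i, a i ∈ LinearMap.range P)
    (S : Finset (Fin n)) :
    P (br (XX br Δ a S) (P (XX br Δ a Sᶜ)))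
      = sgn R ((∑ i ∈ S, p i) * (1 + ∑ i ∈ Sᶜ, p i)) • Jt br P Δ a Sᶜ := by
  have hbmem : P (XX br Δ a Sᶜ) ∈ grading (1 + ∑ i ∈ Sᶜ, p i) :=
    hPparity _ _ (XX_mem hgrade hahom hΔ Sᶜ)
  have h2 := moveb hgrade hskew hjacobi habelian hahom haV (XX br Δ a Sᶜ)
    (1 + ∑ i ∈ Sᶜ, p i) hbmem (S.sort (· ≤ ·)) Δ 1 hΔ
  rw [sum_map_sort] at h2
  have h3 : br (XX br Δ a S) (P (XX br Δ a Sᶜ))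
      = sgn R ((∑ i ∈ S, p i) * (1 + ∑ i ∈ Sᶜ, p i)) •
          iterBr br (br Δ (P (XX br Δ a Sᶜ))) ((S.sort (· ≤ ·)).map a) := by
    rw [h2, smul_smul, ← sgn_add, zmod2_add_self, sgn_zero, one_smul, XX]
  rw [h3, map_smul, Jt, compl_compl]

lemma rhs_eq [Invertible (2 : R)]
    (hgrade : ∀ (i j : ZMod 2) (a b : L), a ∈ grading i → b ∈ grading j →
      br a b ∈ grading (i + j))
    (hskew : ∀ (i j : ZMod 2) (a b : L), a ∈ grading i → b ∈ grading j →
      br a b = (-(sgn R (i * j))) • br b a)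
    (hjacobi : ∀ (i j : ZMod 2) (a b c : L), a ∈ grading i → b ∈ grading j →
      br a (br b c) = br (br a b) c + (sgn R (i * j)) • br b (br a c))
    (hahom : ∀ i, a i ∈ grading (p i)) (hΔ : Δ ∈ grading 1) :
    dbr br P ((⅟(2 : R)) • br Δ Δ) n a
      = ⅟(2 : R) • ∑ S : Finset (Fin n),
          sgn R ((∑ i ∈ S, p i) + kz p S Sᶜ) • P (br (XX br Δ a S) (XX br Δ a Sᶜ)) := by
  have hexp := expand hgrade hskew hjacobi hahom (univ : Finset (Fin n)) Δ 1 hΔ Δ 1 hΔ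
  rw [dbr, List.ofFn_eq_map, ← Fin.sort_univ n, iterBr_smul, map_smul, hexp,
    Finset.powerset_univ, map_sum]
  congr 1
  refine Finset.sum_congr rfl fun S _ => ?_
  rw [map_smul, ← Finset.compl_eq_univ_sdiff, mul_one, XX, XX]

end final

/-- Let `L` be a Lie superalgebra over `R` (with `2` invertible),
`P` an `R`-linear parity-preserving projector whose image is an abelian subalgebra and
which satisfies the distributive law, and `Δ ∈ L` odd.  Then for every `n ≥ 0` and all
homogeneous `a₁,…,aₙ` in `V = P(L)`,
`Jⁿ_Δ(a₁,…,aₙ) = {a₁,…,aₙ}_{Δ²}` where `Δ² = (1/2)[Δ,Δ]`. -/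
theorem jacobiator_of_higher_derived_brackets
    (R : Type*) [CommRing R] [Invertible (2 : R)]
    (L : Type*) [AddCommGroup L] [Module R L]
    (grading : ZMod 2 → Submodule R L)
    (hdirect : DirectSum.IsInternal grading)
    (br : L →ₗ[R] L →ₗ[R] L)
    (hgrade : ∀ (i j : ZMod 2) (a b : L), a ∈ grading i → b ∈ grading j →
      br a b ∈ grading (i + j))
    (hskew : ∀ (i j : ZMod 2) (a b : L), a ∈ grading i → b ∈ grading j →
      br a b = (-(sgn R (i * j))) • br b a)
    (hjacobi : ∀ (i j : ZMod 2) (a b c : L), a ∈ grading i → b ∈ grading j →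
      br a (br b c) = br (br a b) c + (sgn R (i * j)) • br b (br a c))
    (P : L →ₗ[R] L) (hproj : ∀ x, P (P x) = P x)
    (hPparity : ∀ (i : ZMod 2) (x : L), x ∈ grading i → P x ∈ grading i)
    (habelian : ∀ x y : L, br (P x) (P y) = 0)
    (hdistrib : ∀ x y : L, P (br x y) = P (br (P x) y) + P (br x (P y)))
    (Δ : L) (hΔ : Δ ∈ grading 1)
    (n : ℕ) (p : Fin n → ZMod 2) (a : Fin n → L)
    (haV : ∀ i, a i ∈ LinearMap.range P)
    (hahom : ∀ i, a i ∈ grading (p i)) :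
    Jac R (dbr br P Δ) n p a = dbr br P ((⅟(2 : R)) • br Δ Δ) n a := by
  classical
  rw [jac_eq br P Δ p a, rhs_eq hgrade hskew hjacobi hahom hΔ]
  have hsplit : ∀ S : Finset (Fin n),
      P (br (XX br Δ a S) (XX br Δ a Sᶜ))
        = sgn R (∑ i ∈ S, p i) • Jt br P Δ a S
          + sgn R ((∑ i ∈ S, p i) * (1 + ∑ i ∈ Sᶜ, p i)) • Jt br P Δ a Sᶜ := fun S => by
    rw [hdistrib, termA hgrade hskew hjacobi hPparity habelian hΔ hahom haV S,
      termB hgrade hskew hjacobi hPparity habelian hΔ hahom haV S]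
  have hmain : (∑ S : Finset (Fin n),
        sgn R ((∑ i ∈ S, p i) + kz p S Sᶜ) • P (br (XX br Δ a S) (XX br Δ a Sᶜ)))
      = (∑ S : Finset (Fin n), sgn R (kz p S Sᶜ) • Jt br P Δ a S)
        + ∑ S : Finset (Fin n),
            (sgn R ((∑ i ∈ S, p i) + kz p S Sᶜ)
              * sgn R ((∑ i ∈ S, p i) * (1 + ∑ i ∈ Sᶜ, p i))) • Jt br P Δ a Sᶜ := by
    rw [← Finset.sum_add_distrib]
    refine Finset.sum_congr rfl fun S _ => ?_
    rw [hsplit S, smul_add, smul_smul, smul_smul, ← sgn_add, zmod2_eq4]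
  have hsecond : (∑ S : Finset (Fin n),
        (sgn R ((∑ i ∈ S, p i) + kz p S Sᶜ)
          * sgn R ((∑ i ∈ S, p i) * (1 + ∑ i ∈ Sᶜ, p i))) • Jt br P Δ a Sᶜ)
      = ∑ S : Finset (Fin n), sgn R (kz p S Sᶜ) • Jt br P Δ a S := by
    refine Fintype.sum_bijective compl
      (Function.Involutive.bijective fun S => compl_compl S) _ _ (fun S => ?_)
    rw [compl_compl, ← sgn_add,
      zmod2_eq5 _ _ _ _ (kz_comm_add p Sᶜ S disjoint_compl_left)]
  rw [hmain, hsecond, ← two_smul R, invOf_smul_smul]
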